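/- Let Phi(x,y) = Σ_{n≥1} Σ_{[S,T]∈I_n} x^{L(T)} y^n, where I_n is the set of Tamari intervals in Y_n and L(T) is the number of segments along the left border of T, and let phi(y) = Phi(1,y). Then Phi = x^2 y (1 + Phi/x)(1 + (Phi − phi)/(x−1)). -/

import Mathlib

/-- Planar binary trees, counted by internal nodes. -/
inductive PBT where
  | leaf : PBT
  | node : PBT → PBT → PBT
deriving DecidableEq

namespace PBT

/-- Number of internal nodes. -/
def size : PBT → ℕ
  | leaf => 0
  | node l r => size l + size r + 1

/-- One rotation step, going up in the Tamari order: a right comb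
configuration `a·(b·c)` is replaced by a left comb configuration `(a·b)·c`,
possibly deep inside the tree. -/
inductive Rot : PBT → PBT → Prop
  | rotate (a b c : PBT) : Rot (node a (node b c)) (node (node a b) c)
  | left {l l' : PBT} (r : PBT) : Rot l l' → Rot (node l r) (node l' r)
  | right (l : PBT) {r r' : PBT} : Rot r r' → Rot (node l r) (node l r')

/-- The Tamari order: the reflexive-transitive closure of rotation. -/
def le (S T : PBT) : Prop := Relation.ReflTransGen Rot S T

/-- The unique tree with one internal node. -/
def Y : PBT := node leaf leaf

/-- `S / T`: graft the root of `S` onto the leftmost leaf of `T`. -/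
def graftL : PBT → PBT → PBT
  | S, leaf => S
  | S, node l r => node (graftL S l) r

/-- `T₁ / T₂ / ⋯ / T_k` for a list of trees (the empty graft is the trivial tree). -/
def listGraft (L : List PBT) : PBT := L.foldr graftL leaf

/-- A (nontrivial) tree is indecomposable if it is not of the form `S / T`
with `S`, `T` both nontrivial. -/
def Indec (T : PBT) : Prop :=
  T ≠ leaf ∧ ¬ ∃ S U : PBT, S ≠ leaf ∧ U ≠ leaf ∧ graftL S U = T

end PBT

/-- A pair `(S,T)` is a Tamari interval when `S ≤ T`. -/
def isItv (p : PBT × PBT) : Prop := PBT.le p.1 p.2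

/-- Grafting of intervals, componentwise on minima and maxima:
`J/K = [min J / min K, max J / max K]`. -/
def igraft (p q : PBT × PBT) : PBT × PBT := (PBT.graftL p.1 q.1, PBT.graftL p.2 q.2)

/-- `I₁ / I₂ / ⋯ / I_k` for a list of intervals. -/
def ilistGraft (L : List (PBT × PBT)) : PBT × PBT := L.foldr igraft (PBT.leaf, PBT.leaf)

/-- An interval is indecomposable if it is nontrivial and is not the graft `J/K`
of two nontrivial intervals. -/
def IndecItv (p : PBT × PBT) : Prop :=
  isItv p ∧ p.1 ≠ PBT.leaf ∧
    ¬ ∃ q r : PBT × PBT, isItv q ∧ isItv r ∧ q.1 ≠ PBT.leaf ∧ r.1 ≠ PBT.leaf ∧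
      igraft q r = p

namespace PBT

/-- `Lb T`: the number of segments along the left border of `T`
(the edges on the path from the root to the leftmost leaf); `Lb Y = 2`. -/
def Lb : PBT → ℕ
  | leaf => 1
  | node l _ => Lb l + 1

/-- `addLeft s T`: attach a new left edge at segment `s` (numbered from the root,
starting at `0`) of the left border of `T`. -/
def addLeft : ℕ → PBT → PBT
  | 0, T => node leaf T
  | _ + 1, leaf => leaf
  | s + 1, node l r => node (addLeft s l) r

end PBT

namespace PBT

-- ## basic lemmas

lemma size_graftL (A B : PBT) : (graftL A B).size = A.size + B.size := by
  induction B with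
  | leaf => simp [graftL, size]
  | node l r ihl ihr => simp [graftL, size, ihl]; ring

lemma graftL_leaf_left (B : PBT) : graftL leaf B = B := by
  induction B with
  | leaf => rfl
  | node l r ihl ihr => simp [graftL, ihl]

lemma Lb_pos (T : PBT) : 0 < Lb T := by
  cases T <;> simp [Lb]

lemma Lb_graftL (A B : PBT) : Lb (graftL A B) + 1 = Lb A + Lb B := by
  induction B with
  | leaf => simp [graftL, Lb]
  | node l r ihl ihr => simp only [graftL, Lb]; omega

lemma size_eq_zero {T : PBT} (h : T.size = 0) : T = leaf := by
  cases T with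
  | leaf => rfl
  | node l r => simp [size] at h

lemma size_pos {T : PBT} (h : T ≠ leaf) : 0 < T.size := by
  cases T with
  | leaf => exact absurd rfl h
  | node l r => simp [size]

lemma Rot.size_eq {S T : PBT} (h : Rot S T) : S.size = T.size := by
  induction h with
  | rotate a b c => simp [size]; ring
  | left r h ih => simp [size, ih]
  | right l h ih => simp [size, ih]

lemma not_rot_leaf {T : PBT} : ¬ Rot leaf T := fun h => by cases h

lemma not_rot_to_leaf {T : PBT} : ¬ Rot T leaf := fun h => by cases h

lemma le_size_eq {S T : PBT} (h : le S T) : S.size = T.size := by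
  induction h with
  | refl => rfl
  | tail _ h ih => rw [ih, h.size_eq]

lemma le_node {l l' r r' : PBT} (hl : le l l') (hr : le r r') :
    le (node l r) (node l' r') := by
  have h1 : le (node l r) (node l' r) :=
    Relation.ReflTransGen.lift (fun x => node x r) (fun _ _ h => Rot.left r h) _ _ hl
  have h2 : le (node l' r) (node l' r') :=
    Relation.ReflTransGen.lift (fun x => node l' x) (fun _ _ h => Rot.right l' h) _ _ hr
  exact h1.trans h2

lemma rot_graftL_left {A A' : PBT} (B : PBT) (h : Rot A A') :
    Rot (graftL A B) (graftL A' B) := by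
  induction B with
  | leaf => exact h
  | node l r ihl ihr => exact Rot.left r ihl

lemma rot_graftL_right (A : PBT) {B B' : PBT} (h : Rot B B') :
    Rot (graftL A B) (graftL A B') := by
  induction h with
  | rotate a b c => exact Rot.rotate (graftL A a) b c
  | left r h ih => exact Rot.left r ih
  | right l h ih => exact Rot.right (graftL A l) h

lemma le_graftL {A A' B B' : PBT} (hA : le A A') (hB : le B B') :
    le (graftL A B) (graftL A' B') := by
  have h1 : le (graftL A B) (graftL A' B) :=
    Relation.ReflTransGen.lift (fun x => graftL x B) (fun _ _ h => rot_graftL_left B h) _ _ hA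
  have h2 : le (graftL A' B) (graftL A' B') :=
    Relation.ReflTransGen.lift (fun x => graftL A' x) (fun _ _ h => rot_graftL_right A' h) _ _ hB
  exact h1.trans h2

lemma rot_of_graftL {A B C : PBT} (h : Rot (graftL A B) C) :
    ∃ A' B', C = graftL A' B' ∧ ((Rot A A' ∧ B' = B) ∨ (A' = A ∧ Rot B B')) := by
  induction B generalizing C with
  | leaf => exact ⟨C, leaf, rfl, Or.inl ⟨h, rfl⟩⟩
  | node l r ihl ihr =>
    simp only [graftL] at h
    cases h with
    | rotate a b c =>
      exact ⟨A, node (node l b) c, by simp [graftL], Or.inr ⟨rfl, Rot.rotate l b c⟩⟩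
    | left r h' =>
      obtain ⟨A', l', rfl, hc⟩ := ihl h'
      rcases hc with ⟨h1, h2⟩ | ⟨h1, h2⟩
      · subst h2
        exact ⟨A', node l' r, by simp [graftL], Or.inl ⟨h1, rfl⟩⟩
      · subst h1
        exact ⟨A', node l' r, by simp [graftL], Or.inr ⟨rfl, Rot.left r h2⟩⟩
    | right _ h' =>
      exact ⟨A, node l _, by simp [graftL], Or.inr ⟨rfl, Rot.right l h'⟩⟩

lemma le_of_graftL {A B T : PBT} (h : le (graftL A B) T) :
    ∃ A' B', T = graftL A' B' ∧ le A A' ∧ le B B' := by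
  induction h with
  | refl => exact ⟨A, B, rfl, Relation.ReflTransGen.refl, Relation.ReflTransGen.refl⟩
  | tail _ hstep ih =>
    obtain ⟨A', B', rfl, hA, hB⟩ := ih
    obtain ⟨A'', B'', rfl, hc⟩ := rot_of_graftL hstep
    rcases hc with ⟨h1, h2⟩ | ⟨h1, h2⟩
    · subst h2
      exact ⟨A'', B'', rfl, hA.tail h1, hB⟩
    · subst h1
      exact ⟨A'', B'', rfl, hA, hB.tail h2⟩


lemma indec_iff {S : PBT} : Indec S ↔ ∃ r, S = node leaf r := by
  constructor
  · rintro ⟨h1, h2⟩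
    cases S with
    | leaf => exact absurd rfl h1
    | node l r =>
      cases l with
      | leaf => exact ⟨r, rfl⟩
      | node a b =>
        exact absurd ⟨node a b, node leaf r, by simp, by simp, rfl⟩ h2
  · rintro ⟨r, rfl⟩
    refine ⟨by simp, ?_⟩
    rintro ⟨S, U, hS, hU, hg⟩
    cases U with
    | leaf => exact hU rfl
    | node u v =>
      simp only [graftL, node.injEq] at hg
      have := hg.1
      have hsz : S.size + u.size = 0 := by
        have := congrArg size this
        simpa [size_graftL, size] using this
      exact hS (size_eq_zero (by omega))

lemma indec_node_leaf (r : PBT) : Indec (node leaf r) := indec_iff.mpr ⟨r, rfl⟩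

/-- existence of a bottom indecomposable factor for a decomposable tree -/
lemma bf_exists {l r : PBT} (hl : l ≠ leaf) :
    ∃ A B, Indec A ∧ B ≠ leaf ∧ graftL A B = node l r := by
  induction l generalizing r with
  | leaf => exact absurd rfl hl
  | node l₁ l₂ ih =>
    cases l₁ with
    | leaf =>
      exact ⟨node leaf l₂, node leaf r, indec_node_leaf _, by simp, by simp [graftL]⟩
    | node a b =>
      obtain ⟨A, B, hA, hB, hg⟩ := ih (by simp) (r := l₂)
      exact ⟨A, node B r, hA, by simp, by simp [graftL, hg]⟩

/-- uniqueness of the bottom indecomposable factor -/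
lemma bf_unique {A A' B B' : PBT} (hA : Indec A) (hA' : Indec A')
    (h : graftL A B = graftL A' B') : A = A' ∧ B = B' := by
  induction B generalizing B' with
  | leaf =>
    cases B' with
    | leaf => exact ⟨h, rfl⟩
    | node u v =>
      exfalso
      simp only [graftL] at h
      obtain ⟨rA, hrA⟩ := indec_iff.mp hA
      rw [hrA] at h
      injection h with h1 h2
      have : A'.size + u.size = 0 := by
        have := congrArg size h1.symm
        simpa [size_graftL, size] using this
      exact hA'.1 (size_eq_zero (by omega))
  | node l r ih =>
    cases B' with
    | leaf =>
      exfalso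
      simp only [graftL] at h
      obtain ⟨rA, hrA⟩ := indec_iff.mp hA'
      rw [hrA] at h
      injection h with h1 h2
      have : A.size + l.size = 0 := by
        have := congrArg size h1
        simpa [size_graftL, size] using this
      exact hA.1 (size_eq_zero (by omega))
    | node u v =>
      simp only [graftL, node.injEq] at h
      obtain ⟨h1, h2⟩ := ih h.1
      exact ⟨h1, by rw [h2, h.2]⟩

lemma graftL_inj_size {A A' B B' : PBT} (hsz : A.size = A'.size)
    (h : graftL A B = graftL A' B') : A = A' ∧ B = B' := by
  induction B generalizing B' with
  | leaf =>
    cases B' with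
    | leaf => exact ⟨h, rfl⟩
    | node u v =>
      exfalso
      simp only [graftL] at h
      have := congrArg size h
      rw [hsz] at this
      simp [size, size_graftL] at this
      omega
  | node l r ih =>
    cases B' with
    | leaf =>
      exfalso
      simp only [graftL] at h
      have := congrArg size h
      rw [← hsz] at this
      simp [size, size_graftL] at this
      omega
    | node u v =>
      simp only [graftL, node.injEq] at h
      obtain ⟨h1, h2⟩ := ih h.1
      exact ⟨h1, by rw [h2, h.2]⟩

def removeL : PBT → PBT
  | leaf => leaf
  | node leaf r => r
  | node (node a b) r => node (removeL (node a b)) r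

lemma removeL_node_of_ne_leaf {l : PBT} (hl : l ≠ leaf) (r : PBT) :
    removeL (node l r) = node (removeL l) r := by
  cases l with
  | leaf => exact absurd rfl hl
  | node a b => rfl

lemma rot_ne_leaf_left {U V : PBT} (h : Rot U V) : U ≠ leaf := by
  cases h <;> simp

lemma rot_ne_leaf_right {U V : PBT} (h : Rot U V) : V ≠ leaf := by
  cases h <;> simp

lemma rot_removeL {U V : PBT} (h : Rot U V) : le (removeL U) (removeL V) := by
  induction h with
  | rotate a b c =>
    cases a with
    | leaf =>
      show le (removeL (node leaf (node b c))) (removeL (node (node leaf b) c))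
      simp only [removeL]
      exact Relation.ReflTransGen.refl
    | node a₁ a₂ =>
      show le (removeL (node (node a₁ a₂) (node b c))) (removeL (node (node (node a₁ a₂) b) c))
      simp only [removeL]
      exact Relation.ReflTransGen.single (Rot.rotate _ b c)
  | left r h ih =>
    rw [removeL_node_of_ne_leaf (rot_ne_leaf_left h), removeL_node_of_ne_leaf (rot_ne_leaf_right h)]
    exact Relation.ReflTransGen.lift (fun x => node x r) (fun _ _ h => Rot.left r h) _ _ ih
  | right l h ih =>
    cases l with
    | leaf =>
      show le (removeL (node leaf _)) (removeL (node leaf _))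
      rw [removeL, removeL]
      exact Relation.ReflTransGen.single h
    | node a b =>
      show le (removeL (node (node a b) _)) (removeL (node (node a b) _))
      simp only [removeL]
      exact Relation.ReflTransGen.single (Rot.right _ h)

lemma le_removeL {U V : PBT} (h : le U V) : le (removeL U) (removeL V) := by
  induction h with
  | refl => exact Relation.ReflTransGen.refl
  | tail _ hstep ih => exact ih.trans (rot_removeL hstep)

lemma le_removeL' {S T : PBT} (h : le (node leaf S) T) : le S (removeL T) := by
  have := le_removeL h
  rwa [removeL] at this

lemma addLeft_ne_leaf {j : ℕ} {T : PBT} (h : j < Lb T) : addLeft j T ≠ leaf := by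
  cases j with
  | zero => simp [addLeft]
  | succ j =>
    cases T with
    | leaf => simp [Lb] at h
    | node l r => simp [addLeft]

lemma Lb_addLeft {j : ℕ} {T : PBT} (h : j < Lb T) : Lb (addLeft j T) = j + 2 := by
  induction j generalizing T with
  | zero => simp [addLeft, Lb]
  | succ j ih =>
    cases T with
    | leaf => simp [Lb] at h
    | node l r =>
      have h' : j < Lb l := by simpa [Lb] using h
      simp only [addLeft, Lb, ih h']

lemma size_addLeft {j : ℕ} {T : PBT} (h : j < Lb T) : (addLeft j T).size = T.size + 1 := by
  induction j generalizing T with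
  | zero => simp [addLeft, size]
  | succ j ih =>
    cases T with
    | leaf => simp [Lb] at h
    | node l r =>
      have h' : j < Lb l := by simpa [Lb] using h
      simp only [addLeft, size, ih h']
      omega

lemma removeL_addLeft {j : ℕ} {T : PBT} (h : j < Lb T) : removeL (addLeft j T) = T := by
  induction j generalizing T with
  | zero => simp [addLeft, removeL]
  | succ j ih =>
    cases T with
    | leaf => simp [Lb] at h
    | node l r =>
      have h' : j < Lb l := by simpa [Lb] using h
      simp only [addLeft]
      rw [removeL_node_of_ne_leaf (addLeft_ne_leaf h'), ih h']

lemma addLeft_removeL {T : PBT} (h : T ≠ leaf) : addLeft (Lb T - 2) (removeL T) = T := by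
  induction T with
  | leaf => exact absurd rfl h
  | node l r ih =>
    cases l with
    | leaf => simp [Lb, removeL, addLeft]
    | node a b =>
      have hLb := Lb_pos a
      rw [removeL_node_of_ne_leaf (by simp)]
      have : Lb (node (node a b) r) - 2 = (Lb (node a b) - 2) + 1 := by
        simp only [Lb]; omega
      rw [this]
      simp only [addLeft]
      rw [ih (by simp)]

lemma Lb_removeL_lt {T : PBT} (h : T ≠ leaf) : Lb T < Lb (removeL T) + 2 := by
  induction T with
  | leaf => exact absurd rfl h
  | node l r ih =>
    cases l with
    | leaf => simp [Lb, removeL]; exact Lb_pos r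
    | node a b =>
      rw [removeL_node_of_ne_leaf (by simp)]
      have := ih (by simp)
      simp only [Lb] at *
      omega

lemma size_removeL {T : PBT} (h : T ≠ leaf) : (removeL T).size + 1 = T.size := by
  induction T with
  | leaf => exact absurd rfl h
  | node l r ih =>
    cases l with
    | leaf => simp [removeL, size]
    | node a b =>
      rw [removeL_node_of_ne_leaf (by simp)]
      have := ih (by simp)
      simp only [size] at *
      omega

lemma rot_addLeft {j : ℕ} {T : PBT} (h : j + 1 < Lb T) :
    Rot (addLeft j T) (addLeft (j + 1) T) := by
  induction j generalizing T with
  | zero =>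
    cases T with
    | leaf => simp [Lb] at h
    | node l r =>
      show Rot (node leaf (node l r)) (node (addLeft 0 l) r)
      exact Rot.rotate leaf l r
  | succ j ih =>
    cases T with
    | leaf => simp [Lb] at h
    | node l r =>
      have h' : j + 1 < Lb l := by simpa [Lb] using h
      exact Rot.left r (ih h')

lemma le_addLeft_zero {j : ℕ} {T : PBT} (h : j < Lb T) :
    le (node leaf T) (addLeft j T) := by
  induction j with
  | zero => exact Relation.ReflTransGen.refl
  | succ j ih => exact (ih (by omega)).tail (rot_addLeft h)

lemma le_node_leaf_addLeft {S T : PBT} {j : ℕ} (hST : le S T) (hj : j < Lb T) :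
    le (node leaf S) (addLeft j T) :=
  (le_node Relation.ReflTransGen.refl hST).trans (le_addLeft_zero hj)

-- ## finiteness

lemma finite_trees (n : ℕ) : {T : PBT | T.size = n}.Finite := by
  induction n using Nat.strong_induction_on with
  | _ n ih =>
    cases n with
    | zero =>
      refine Set.Finite.subset (Set.finite_singleton leaf) ?_
      intro T hT
      exact size_eq_zero hT
    | succ n =>
      have hsub : {T : PBT | T.size = n + 1} ⊆ ⋃ k ∈ Finset.range (n + 1),
          (fun p : PBT × PBT => node p.1 p.2) '' ({l | l.size = k} ×ˢ {r | r.size = n - k}) := by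
        intro T hT
        cases T with
        | leaf => simp [size] at hT
        | node l r =>
          simp only [Set.mem_setOf_eq, size] at hT
          apply Set.mem_biUnion (show l.size ∈ (Finset.range (n+1) : Finset ℕ) by
            simp [Finset.mem_range]; omega)
          exact ⟨(l, r), ⟨rfl, by simp only [Set.mem_setOf_eq]; omega⟩, rfl⟩
      refine Set.Finite.subset ?_ hsub
      apply Set.Finite.biUnion (Finset.range (n + 1)).finite_toSet
      intro k hk
      simp only [Finset.mem_coe, Finset.mem_range] at hk
      exact ((ih k (by omega)).prod (ih (n - k) (by omega))).image _

end PBT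

lemma finite_itv (n : ℕ) :
    {p : PBT × PBT | p.1.size = n ∧ p.2.size = n ∧ isItv p}.Finite := by
  refine Set.Finite.subset ((PBT.finite_trees n).prod (PBT.finite_trees n)) ?_
  rintro ⟨S, T⟩ ⟨h1, h2, _⟩
  exact ⟨h1, h2⟩

/-- The finset of Tamari intervals of size `n`. -/
noncomputable def itvF (n : ℕ) : Finset (PBT × PBT) := (finite_itv n).toFinset

lemma mem_itvF {n : ℕ} {p : PBT × PBT} :
    p ∈ itvF n ↔ p.1.size = n ∧ p.2.size = n ∧ isItv p := by
  simp [itvF, Set.Finite.mem_toFinset]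

lemma finite_ind (n : ℕ) :
    {p : PBT × PBT | (p.1.size = n ∧ p.2.size = n ∧ isItv p) ∧ PBT.Indec p.1}.Finite :=
  (finite_itv n).subset fun p hp => hp.1

/-- The finset of indecomposable Tamari intervals of size `n`. -/
noncomputable def indF (n : ℕ) : Finset (PBT × PBT) := (finite_ind n).toFinset

lemma mem_indF {n : ℕ} {p : PBT × PBT} :
    p ∈ indF n ↔ (p.1.size = n ∧ p.2.size = n ∧ isItv p) ∧ PBT.Indec p.1 := by
  simp [indF, Set.Finite.mem_toFinset]

open PowerSeries

/-- The refined generating series `Φ(x,y) = Σ_{n≥1} Σ_{[S,T] ∈ I_n} x^{L(T)} yⁿ`,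
as a power series in `y` with polynomial coefficients in `x`. -/
noncomputable def Phi : PowerSeries (Polynomial ℚ) :=
  PowerSeries.mk fun n => if n = 0 then 0 else
    ∑ᶠ p : {p : PBT × PBT // p.1.size = n ∧ p.2.size = n ∧ isItv p},
      (Polynomial.X : Polynomial ℚ) ^ PBT.Lb (p.1).2

/-- The generating series `φ(y) = Φ(1,y) = Σ_{n≥1} |I_n| yⁿ`. -/
noncomputable def phi : PowerSeries (Polynomial ℚ) :=
  PowerSeries.mk fun n => if n = 0 then 0 else
    (Nat.card {p : PBT × PBT // p.1.size = n ∧ p.2.size = n ∧ isItv p} :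
      Polynomial ℚ)


attribute [local instance] Classical.propDecidable

noncomputable section TamariAux

open Finset

/-- coefficient of `yⁿ` in `Φ` -/
def Fc (n : ℕ) : Polynomial ℚ := ∑ p ∈ itvF n, (Polynomial.X : Polynomial ℚ) ^ PBT.Lb p.2

/-- coefficient of `yⁿ` restricted to indecomposable intervals -/
def Gc (n : ℕ) : Polynomial ℚ := ∑ p ∈ indF n, (Polynomial.X : Polynomial ℚ) ^ PBT.Lb p.2

def cnt (n : ℕ) : Polynomial ℚ := ((itvF n).card : Polynomial ℚ)

lemma cnt_eq (n : ℕ) : cnt n = ∑ _p ∈ itvF n, (1 : Polynomial ℚ) := by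
  simp [cnt]

lemma itvF_zero : itvF 0 = {(PBT.leaf, PBT.leaf)} := by
  ext p
  rw [mem_itvF]
  constructor
  · rintro ⟨h1, h2, _⟩
    have e1 := PBT.size_eq_zero h1
    have e2 := PBT.size_eq_zero h2
    rw [Finset.mem_singleton]
    exact Prod.ext e1 e2
  · intro hp
    rw [Finset.mem_singleton] at hp
    subst hp
    exact ⟨rfl, rfl, Relation.ReflTransGen.refl⟩

/-- Bijection 1 : indecomposable intervals of size `n` correspond to intervals of
size `n-1` with a marked segment on the left border of the top tree. -/
lemma Gc_eq {n : ℕ} (hn : n ≠ 0) :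
    Gc n = ∑ q ∈ (itvF (n-1)).sigma (fun p => Finset.range (PBT.Lb p.2)),
      (Polynomial.X : Polynomial ℚ) ^ (q.2 + 2) := by
  rw [Gc]
  symm
  refine Finset.sum_bij (fun q _ => (PBT.node PBT.leaf q.1.1, PBT.addLeft q.2 q.1.2))
    ?_ ?_ ?_ ?_
  · rintro ⟨⟨S', T'⟩, j⟩ hq
    rw [Finset.mem_sigma, Finset.mem_range] at hq
    obtain ⟨hmem, hj⟩ := hq
    rw [mem_itvF] at hmem
    obtain ⟨h1, h2, h3⟩ := hmem
    dsimp only at h1 h2 h3 hj ⊢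
    rw [mem_indF]
    refine ⟨⟨?_, ?_, ?_⟩, PBT.indec_node_leaf _⟩
    · simp only [PBT.size]
      omega
    · show (PBT.addLeft j T').size = n
      rw [PBT.size_addLeft hj]
      omega
    · exact PBT.le_node_leaf_addLeft h3 hj
  · rintro ⟨⟨S1, T1⟩, j1⟩ h1 ⟨⟨S2, T2⟩, j2⟩ h2 heq
    rw [Finset.mem_sigma, Finset.mem_range] at h1 h2
    dsimp only at h1 h2
    simp only [Prod.mk.injEq, PBT.node.injEq, true_and] at heq
    obtain ⟨hS, hadd⟩ := heq
    have hLb : j1 + 2 = j2 + 2 := by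
      rw [← PBT.Lb_addLeft h1.2, ← PBT.Lb_addLeft h2.2, hadd]
    have hj : j1 = j2 := by omega
    subst hj
    have hT : T1 = T2 := by
      rw [← PBT.removeL_addLeft h1.2, ← PBT.removeL_addLeft h2.2, hadd]
    simp [hS, hT]
  · rintro ⟨S, T⟩ hp
    rw [mem_indF] at hp
    obtain ⟨⟨h1, h2, h3⟩, h4⟩ := hp
    obtain ⟨S', rfl⟩ := PBT.indec_iff.mp h4
    have hT : T ≠ PBT.leaf := by
      intro hT; subst hT
      simp only [PBT.size] at h1 h2
      omega
    have hTn : PBT.node PBT.leaf S' ≠ PBT.leaf := by simp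
    have hLb2 : 2 ≤ PBT.Lb T := by
      cases T with
      | leaf => exact absurd rfl hT
      | node l r => have := PBT.Lb_pos l; simp only [PBT.Lb]; omega
    refine ⟨⟨(S', PBT.removeL T), PBT.Lb T - 2⟩, ?_, ?_⟩
    · rw [Finset.mem_sigma, Finset.mem_range, mem_itvF]
      have hLrm := PBT.Lb_removeL_lt hT
      have hsz := PBT.size_removeL hT
      dsimp only at h1 h2 h3 ⊢
      refine ⟨⟨?_, ?_, ?_⟩, by omega⟩
      · simp only [PBT.size] at h1; omega
      · omega
      · exact PBT.le_removeL' h3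
    · show (PBT.node PBT.leaf S', PBT.addLeft (PBT.Lb T - 2) (PBT.removeL T)) = _
      rw [PBT.addLeft_removeL hT]
  · rintro ⟨⟨S', T'⟩, j⟩ hq
    rw [Finset.mem_sigma, Finset.mem_range] at hq
    show (Polynomial.X : Polynomial ℚ) ^ (j + 2) = Polynomial.X ^ PBT.Lb (PBT.addLeft j T')
    rw [PBT.Lb_addLeft hq.2]

lemma Gc_mul {n : ℕ} (hn : n ≠ 0) :
    Gc n * (Polynomial.X - 1) = Polynomial.X ^ 2 * (Fc (n - 1) - cnt (n - 1)) := by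
  rw [Gc_eq hn, Finset.sum_sigma, Finset.sum_mul]
  have step : ∀ p ∈ itvF (n-1),
      (∑ j ∈ Finset.range (PBT.Lb p.2), (Polynomial.X : Polynomial ℚ) ^ (j + 2)) *
        (Polynomial.X - 1)
      = Polynomial.X ^ 2 * (Polynomial.X ^ PBT.Lb p.2 - 1) := by
    intro p _
    have : (∑ j ∈ Finset.range (PBT.Lb p.2), (Polynomial.X : Polynomial ℚ) ^ (j + 2))
        = Polynomial.X ^ 2 * ∑ j ∈ Finset.range (PBT.Lb p.2), Polynomial.X ^ j := by
      rw [Finset.mul_sum]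
      apply Finset.sum_congr rfl
      intro j _
      ring
    rw [this, mul_assoc, geom_sum_mul]
  rw [Finset.sum_congr rfl step, ← Finset.mul_sum, Fc, cnt_eq, ← Finset.sum_sub_distrib]

/-- Bijection 2 : decomposable intervals of size `n` correspond to pairs
(indecomposable interval, interval). -/
lemma dec_mul {n : ℕ} (hn : n ≠ 0) :
    (∑ p ∈ (itvF n).filter (fun p => ¬ PBT.Indec p.1),
        (Polynomial.X : Polynomial ℚ) ^ PBT.Lb p.2) * Polynomial.X
    = ∑ ab ∈ (Finset.HasAntidiagonal.antidiagonal n).filter (fun ab => ab.1 ≠ 0 ∧ ab.2 ≠ 0),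
        Gc ab.1 * Fc ab.2 := by
  rw [Finset.sum_mul]
  have expand : ∀ ab ∈ (Finset.HasAntidiagonal.antidiagonal n).filter (fun ab => ab.1 ≠ 0 ∧ ab.2 ≠ 0),
      Gc ab.1 * Fc ab.2 = ∑ qr ∈ indF ab.1 ×ˢ itvF ab.2,
        (Polynomial.X : Polynomial ℚ) ^ PBT.Lb qr.1.2 * Polynomial.X ^ PBT.Lb qr.2.2 := by
    intro ab _
    rw [Gc, Fc, Finset.sum_mul_sum]
    rw [Finset.sum_product]
  rw [Finset.sum_congr rfl expand, Finset.sum_sigma']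
  symm
  refine Finset.sum_bij (fun q _ => igraft q.2.1 q.2.2) ?_ ?_ ?_ ?_
  · rintro ⟨⟨a, b⟩, ⟨q, r⟩⟩ hq
    rw [Finset.mem_sigma, Finset.mem_filter, Finset.HasAntidiagonal.mem_antidiagonal, Finset.mem_product,
      mem_indF, mem_itvF] at hq
    obtain ⟨⟨hab, ha, hb⟩, ⟨⟨q1, q2, q3⟩, q4⟩, ⟨r1, r2, r3⟩⟩ := hq
    dsimp only at hab ha hb q1 q2 q3 q4 r1 r2 r3
    rw [Finset.mem_filter, mem_itvF]
    refine ⟨⟨?_, ?_, ?_⟩, ?_⟩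
    · show (PBT.graftL q.1 r.1).size = n
      rw [PBT.size_graftL]; omega
    · show (PBT.graftL q.2 r.2).size = n
      rw [PBT.size_graftL]; omega
    · exact PBT.le_graftL q3 r3
    · intro hi
      exact hi.2 ⟨q.1, r.1, q4.1, fun hr => hb (by rw [← r1, hr]; rfl), rfl⟩
  · rintro ⟨⟨a, b⟩, ⟨q, r⟩⟩ h1 ⟨⟨a', b'⟩, ⟨q', r'⟩⟩ h2 heq
    rw [Finset.mem_sigma, Finset.mem_filter, Finset.HasAntidiagonal.mem_antidiagonal, Finset.mem_product,
      mem_indF, mem_itvF] at h1 h2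
    obtain ⟨⟨hab, ha, hb⟩, ⟨⟨q1, q2, q3⟩, q4⟩, ⟨r1, r2, r3⟩⟩ := h1
    obtain ⟨⟨hab', ha', hb'⟩, ⟨⟨q1', q2', q3'⟩, q4'⟩, ⟨r1', r2', r3'⟩⟩ := h2
    dsimp only at hab ha hb q1 q2 q3 q4 r1 r2 r3 hab' ha' hb' q1' q2' q3' q4' r1' r2' r3'
    simp only [igraft, Prod.mk.injEq] at heq
    obtain ⟨hlow, hup⟩ := heq
    obtain ⟨e1, e2⟩ := PBT.bf_unique q4 q4' hlow
    have hsz : q.2.size = q'.2.size := by rw [q2, q2', ← q1, ← q1', e1]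
    obtain ⟨e3, e4⟩ := PBT.graftL_inj_size hsz hup
    have eab : a = a' := by rw [← q1, ← q1', e1]
    have ebb : b = b' := by rw [← r1, ← r1', e2]
    subst eab; subst ebb
    have eq1 : q = q' := Prod.ext e1 e3
    have eq2 : r = r' := Prod.ext e2 e4
    rw [eq1, eq2]
  · rintro ⟨S, T⟩ hp
    rw [Finset.mem_filter, mem_itvF] at hp
    obtain ⟨⟨h1, h2, h3⟩, h4⟩ := hp
    dsimp only at h1 h2 h3 h4
    cases S with
    | leaf => exact absurd h1.symm hn
    | node l r =>
      have hl : l ≠ PBT.leaf := by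
        intro h; subst h; exact h4 (PBT.indec_node_leaf r)
      obtain ⟨A, B, hA, hB, hgr⟩ := PBT.bf_exists hl (r := r)
      have h3' : PBT.le (PBT.graftL A B) T := by rw [hgr]; exact h3
      obtain ⟨A', B', rfl, hAA, hBB⟩ := PBT.le_of_graftL h3'
      have hsz : A.size + B.size = n := by
        rw [← PBT.size_graftL, hgr]; exact h1
      have hA' := PBT.le_size_eq hAA
      have hB' := PBT.le_size_eq hBB
      refine ⟨⟨(A.size, B.size), ((A, A'), (B, B'))⟩, ?_, ?_⟩
      · rw [Finset.mem_sigma, Finset.mem_filter, Finset.HasAntidiagonal.mem_antidiagonal, Finset.mem_product,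
          mem_indF, mem_itvF]
        dsimp only
        refine ⟨⟨hsz, ?_, ?_⟩, ⟨⟨rfl, hA'.symm, hAA⟩, hA⟩, ⟨rfl, hB'.symm, hBB⟩⟩
        · exact fun h0 => hA.1 (PBT.size_eq_zero h0)
        · exact fun h0 => hB (PBT.size_eq_zero h0)
      · show igraft (A, A') (B, B') = (PBT.node l r, PBT.graftL A' B')
        rw [igraft, hgr]
  · rintro ⟨⟨a, b⟩, ⟨q, r⟩⟩ hq
    rw [Finset.mem_sigma, Finset.mem_filter, Finset.HasAntidiagonal.mem_antidiagonal, Finset.mem_product,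
      mem_indF, mem_itvF] at hq
    dsimp only
    show _ = (Polynomial.X : Polynomial ℚ) ^ PBT.Lb (PBT.graftL q.2 r.2) * Polynomial.X
    have := PBT.Lb_graftL q.2 r.2
    rw [← pow_add, ← pow_succ]
    congr 1
    omega

end TamariAux


open PowerSeries in
/-- The generating series of indecomposable intervals. -/
noncomputable def Psi : PowerSeries (Polynomial ℚ) :=
  PowerSeries.mk fun n => if n = 0 then 0 else Gc n

section Series

open PowerSeries

lemma coeff_Psi (n : ℕ) : (coeff n) Psi = if n = 0 then 0 else Gc n :=
  coeff_mk _ _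

lemma coeff_Phi (n : ℕ) : (coeff n) Phi = if n = 0 then 0 else Fc n := by
  rw [Phi, coeff_mk]
  rcases eq_or_ne n 0 with rfl | hn
  · simp
  · rw [if_neg hn, if_neg hn]
    have h1 := finsum_subtype_eq_finsum_cond
      (f := fun p : PBT × PBT => (Polynomial.X : Polynomial ℚ) ^ PBT.Lb p.2)
      (p := fun p : PBT × PBT => p.1.size = n ∧ p.2.size = n ∧ isItv p)
    exact h1.trans (finsum_mem_eq_finite_toFinset_sum _ (finite_itv n))

lemma coeff_phi (n : ℕ) : (coeff n) phi = if n = 0 then 0 else cnt n := by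
  rw [phi, coeff_mk]
  rcases eq_or_ne n 0 with rfl | hn
  · simp
  · rw [if_neg hn, if_neg hn, cnt]
    congr 1
    exact Nat.card_eq_card_finite_toFinset (finite_itv n)

lemma indF_eq_filter (n : ℕ) :
    (itvF n).filter (fun p => PBT.Indec p.1) = indF n := by
  ext p
  rw [Finset.mem_filter, mem_itvF, mem_indF]

lemma S1 : Phi * (C Polynomial.X)
    = Psi * (C Polynomial.X + Phi) := by
  ext n
  rw [mul_add, map_add, coeff_mul_C, coeff_mul_C, coeff_Phi, coeff_Psi, coeff_mul]
  rcases eq_or_ne n 0 with rfl | hn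
  · simp [coeff_Psi, coeff_Phi]
  · rw [if_neg hn, if_neg hn]
    have hsum : ∑ ab ∈ Finset.HasAntidiagonal.antidiagonal n, (coeff ab.1) Psi * (coeff ab.2) Phi
        = ∑ ab ∈ (Finset.HasAntidiagonal.antidiagonal n).filter (fun ab => ab.1 ≠ 0 ∧ ab.2 ≠ 0),
            Gc ab.1 * Fc ab.2 := by
      rw [Finset.sum_filter]
      apply Finset.sum_congr rfl
      intro ab _
      rw [coeff_Psi, coeff_Phi]
      by_cases h1 : ab.1 = 0 <;> by_cases h2 : ab.2 = 0 <;> simp [h1, h2]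
    rw [hsum, ← dec_mul hn]
    have split : Fc n = Gc n + ∑ p ∈ (itvF n).filter (fun p => ¬ PBT.Indec p.1),
        (Polynomial.X : Polynomial ℚ) ^ PBT.Lb p.2 := by
      rw [Fc, Gc, ← indF_eq_filter]
      exact (Finset.sum_filter_add_sum_filter_not (itvF n) _ _).symm
    rw [split, add_mul]

lemma Fc_zero : Fc 0 = Polynomial.X := by
  rw [Fc, itvF_zero]
  simp [PBT.Lb]

lemma cnt_zero : cnt 0 = 1 := by
  rw [cnt, itvF_zero]
  simp

lemma S2 : Psi * C (Polynomial.X - 1) =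
    C (Polynomial.X ^ 2) *
      (PowerSeries.X * (C Polynomial.X - 1 + Phi - phi)) := by
  ext n
  rw [coeff_mul_C, coeff_C_mul, coeff_Psi]
  cases n with
  | zero =>
    rw [if_pos rfl, zero_mul]
    have : (coeff 0) (PowerSeries.X *
        (C Polynomial.X - 1 + Phi - phi)) = 0 := by
      rw [coeff_mul]
      simp [coeff_X]
    rw [this, mul_zero]
  | succ m =>
    rw [if_neg (Nat.succ_ne_zero m), coeff_succ_X_mul]
    rw [map_sub, map_add, map_sub, coeff_Phi, coeff_phi, coeff_C, coeff_one]
    cases m with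
    | zero =>
      rw [Gc_mul (Nat.one_ne_zero)]
      norm_num [Fc_zero, cnt_zero]
    | succ k =>
      rw [Gc_mul (Nat.succ_ne_zero (k+1))]
      have h1 : k + 1 + 1 - 1 = k + 1 := rfl
      rw [h1]
      simp [Nat.succ_ne_zero]

end Series

/-- The functional equation `Φ = x²y (1 + Φ/x)(1 + (Φ−φ)/(x−1))`, written with
denominators cleared: `Φ·(x−1) = x·y·(x+Φ)·(x−1+Φ−φ)`. -/
theorem Phi_functional_equation :
    letI x : PowerSeries (Polynomial ℚ) := PowerSeries.C Polynomial.X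
    letI y : PowerSeries (Polynomial ℚ) := PowerSeries.X
    Phi * (x - 1) = x * y * (x + Phi) * (x - 1 + Phi - phi) := by
  show Phi * (PowerSeries.C Polynomial.X - 1) =
    PowerSeries.C Polynomial.X * PowerSeries.X * (PowerSeries.C Polynomial.X + Phi) *
      (PowerSeries.C Polynomial.X - 1 + Phi - phi)
  have hx : (PowerSeries.C (Polynomial.X : Polynomial ℚ)) ≠ 0 := by
    intro h
    have h0 := congrArg (PowerSeries.coeff 0) h
    simp only [PowerSeries.coeff_C, if_pos rfl, map_zero] at h0
    exact Polynomial.X_ne_zero h0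
  apply mul_left_cancel₀ hx
  have ec : PowerSeries.C (Polynomial.X : Polynomial ℚ) - 1
      = PowerSeries.C ((Polynomial.X : Polynomial ℚ) - 1) := by
    rw [map_sub, map_one]
  have ec2 : PowerSeries.C ((Polynomial.X : Polynomial ℚ) ^ 2)
      = (PowerSeries.C (Polynomial.X : Polynomial ℚ)) ^ 2 := by
    rw [map_pow]
  calc PowerSeries.C Polynomial.X * (Phi * (PowerSeries.C Polynomial.X - 1))
      = (Phi * PowerSeries.C Polynomial.X) * (PowerSeries.C Polynomial.X - 1) := by ring
    _ = (Psi * (PowerSeries.C Polynomial.X + Phi)) * (PowerSeries.C Polynomial.X - 1) := by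
        rw [S1]
    _ = (Psi * PowerSeries.C (Polynomial.X - 1)) *
          (PowerSeries.C Polynomial.X + Phi) := by rw [← ec]; ring
    _ = (PowerSeries.C (Polynomial.X ^ 2) *
          (PowerSeries.X * (PowerSeries.C Polynomial.X - 1 + Phi - phi))) *
          (PowerSeries.C Polynomial.X + Phi) := by rw [S2]
    _ = PowerSeries.C Polynomial.X *
          (PowerSeries.C Polynomial.X * PowerSeries.X *
            (PowerSeries.C Polynomial.X + Phi) *
            (PowerSeries.C Polynomial.X - 1 + Phi - phi)) := by rw [ec2]; ring
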